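/- Let Y be a Polish space and F a continuous quasi-linear form on the bounded-above continuous functions C_b(Y) (valued in ℝ ∪ {-∞}). Then the formula F̃(φ) = sup{ F(ψ) : ψ ∈ C_b(Y), ψ ≤ φ } defines the unique extension of F to a continuous quasi-linear form on the lower semicontinuous functions Y → ℝ ∪ {-∞}. -/

import Mathlib

open EMetric Set
open scoped ENNReal

namespace ExtLsc

lemma cancel (r : ℝ) (x : EReal) : ((-r : ℝ) : EReal) + ((r : EReal) + x) = x := by
  induction x using EReal.rec with
  | bot => simp
  | coe x => rw [← EReal.coe_add, ← EReal.coe_add]; norm_num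
  | top => simp [EReal.add_top_of_ne_bot, EReal.coe_add_top]

lemma cancel' (r : ℝ) (x : EReal) : (r : EReal) + (((-r : ℝ) : EReal) + x) = x := by
  have := cancel (-r) x; rwa [neg_neg] at this

/-- Adding a real constant as an order isomorphism of `EReal`. -/
noncomputable def addIso (r : ℝ) : EReal ≃o EReal where
  toFun x := (r : EReal) + x
  invFun x := ((-r : ℝ) : EReal) + x
  left_inv x := cancel r x
  right_inv x := cancel' r x
  map_rel_iff' := by
    intro a b
    simp only [Equiv.coe_fn_mk]
    constructor
    · intro h
      have := add_le_add_right h ((-r : ℝ) : EReal)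
      rwa [cancel, cancel] at this
    · intro h; exact add_le_add_right h _

lemma add_iSup (r : ℝ) {ι : Sort*} (f : ι → EReal) :
    (r : EReal) + ⨆ i, f i = ⨆ i, ((r : EReal) + f i) :=
  (addIso r).map_iSup f

lemma continuous_const_add (r : ℝ) : Continuous fun x : EReal => (r : EReal) + x := by
  rw [continuous_iff_continuousAt]
  intro x
  exact (EReal.continuousAt_add (p := ((r : EReal), x)) (Or.inl (EReal.coe_ne_top r))
    (Or.inl (EReal.coe_ne_bot r))).comp ((continuous_const.prodMk continuous_id).continuousAt)

variable {Y : Type*} [TopologicalSpace Y]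

def CB (Y : Type*) [TopologicalSpace Y] : Set (Y → EReal) :=
  {φ | Continuous φ ∧ ∃ c : ℝ, ∀ y, φ y ≤ (c : EReal)}

lemma bot_mem : (fun _ : Y => (⊥ : EReal)) ∈ CB Y :=
  ⟨continuous_const, 0, fun _ => bot_le⟩

lemma max_mem {φ ψ : Y → EReal} (hφ : φ ∈ CB Y) (hψ : ψ ∈ CB Y) : φ ⊔ ψ ∈ CB Y := by
  obtain ⟨hc, c, hcb⟩ := hφ
  obtain ⟨hd, d, hdb⟩ := hψ
  refine ⟨?_, max c d, fun y => ?_⟩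
  · have : (φ ⊔ ψ) = fun y => max (φ y) (ψ y) := funext fun y => by
      rw [Pi.sup_apply]
    rw [this]; exact hc.max hd
  · rw [Pi.sup_apply]
    exact sup_le ((hcb y).trans (by exact_mod_cast le_max_left c d))
      ((hdb y).trans (by exact_mod_cast le_max_right c d))

lemma min_mem {φ ψ : Y → EReal} (hφ : φ ∈ CB Y) (hψ : ψ ∈ CB Y) :
    (fun y => φ y ⊓ ψ y) ∈ CB Y := by
  obtain ⟨hc, c, hcb⟩ := hφ
  obtain ⟨hd, _, _⟩ := hψ
  refine ⟨?_, c, fun y => (inf_le_left).trans (hcb y)⟩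
  have : (fun y => φ y ⊓ ψ y) = fun y => min (φ y) (ψ y) := funext fun y => by
    rfl
  rw [this]; exact hc.min hd

lemma const_add_mem (r : ℝ) {φ : Y → EReal} (hφ : φ ∈ CB Y) :
    (fun y => (r : EReal) + φ y) ∈ CB Y := by
  obtain ⟨hc, c, hcb⟩ := hφ
  refine ⟨(continuous_const_add r).comp hc, r + c, fun y => ?_⟩
  rw [EReal.coe_add]
  exact add_le_add_right (hcb y) _

noncomputable def runmax (f : ℕ → Y → EReal) : ℕ → Y → EReal
  | 0 => f 0
  | n + 1 => runmax f n ⊔ f (n + 1)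

lemma runmax_mem {f : ℕ → Y → EReal} (hf : ∀ n, f n ∈ CB Y) : ∀ n, runmax f n ∈ CB Y := by
  intro n
  induction n with
  | zero => exact hf 0
  | succ n ih => exact max_mem ih (hf (n + 1))

lemma le_runmax (f : ℕ → Y → EReal) {k n : ℕ} (h : k ≤ n) : f k ≤ runmax f n := by
  induction n with
  | zero => simp_all [runmax, Nat.le_zero.1 h]
  | succ n ih =>
    rcases Nat.lt_or_ge k (n + 1) with h' | h'
    · exact (ih (Nat.lt_succ_iff.1 h')).trans le_sup_left
    · have : k = n + 1 := le_antisymm h h'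
      subst this; exact le_sup_right

lemma runmax_le (f : ℕ → Y → EReal) {n : ℕ} {h : Y → EReal} (H : ∀ k ≤ n, f k ≤ h) :
    runmax f n ≤ h := by
  induction n with
  | zero => exact H 0 le_rfl
  | succ n ih =>
    exact sup_le (ih fun k hk => H k (hk.trans (Nat.le_succ n))) (H (n + 1) le_rfl)

lemma iSup_runmax (f : ℕ → Y → EReal) (y : Y) :
    ⨆ n, runmax f n y = ⨆ n, f n y := by
  apply le_antisymm
  · exact iSup_le fun n =>
      (runmax_le f (h := fun y => ⨆ m, f m y)
        (fun k _ => fun z => le_iSup (fun m => f m z) k)) y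
  · exact iSup_le fun n => le_trans ((le_runmax f (le_refl n)) y)
      (le_iSup (fun m => runmax f m y) n)

lemma approx0 {Y : Type*} [MetricSpace Y] (φ : Y → EReal) (hφ : LowerSemicontinuous φ) :
    ∃ g : ℚ × ℕ → Y → EReal, (∀ p, g p ∈ CB Y) ∧ (∀ p, g p ≤ φ) ∧
      ∀ y, φ y = ⨆ p, g p y := by
  set U : ℚ → Set Y := fun q => {w | ((q : ℝ) : EReal) < φ w} with hU
  have hUopen : ∀ q, IsOpen (U q) := fun q => hφ.isOpen_preimage _
  set D : ℚ × ℕ → Y → ℝ≥0∞ :=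
    fun p z => (((p.2 : ℝ≥0∞) + 1) * infEdist z (U p.1)ᶜ)⁻¹ with hD
  set g : ℚ × ℕ → Y → EReal :=
    fun p z => ((p.1 : ℝ) : EReal) + (-(ENNReal.toEReal (D p z))) with hgdef
  have hg_bd : ∀ p z, g p z ≤ ((p.1 : ℝ) : EReal) := by
    intro p z
    have h0 : (0 : EReal) ≤ ENNReal.toEReal (D p z) := EReal.coe_ennreal_nonneg _
    have h1 : -(ENNReal.toEReal (D p z)) ≤ -(0 : EReal) := EReal.neg_le_neg_iff.2 h0
    calc g p z ≤ ((p.1 : ℝ) : EReal) + -(0 : EReal) := add_le_add_right h1 _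
    _ = _ := by rw [neg_zero, add_zero]
  have hg_cont : ∀ p, Continuous (g p) := by
    intro p
    have h1 : Continuous fun z : Y => ENNReal.toEReal (D p z) :=
      continuous_coe_ennreal_ereal.comp
        (continuous_inv.comp ((ENNReal.continuous_const_mul (by simp)).comp continuous_infEdist))
    exact (continuous_const_add (p.1 : ℝ)).comp h1.neg
  have hg_le : ∀ p, g p ≤ φ := by
    intro p z
    by_cases hz : z ∈ U p.1
    · exact (hg_bd p z).trans (le_of_lt hz)
    · have e0 : infEdist z (U p.1)ᶜ = 0 := infEdist_zero_of_mem hz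
      show ((p.1 : ℝ) : EReal) + -(ENNReal.toEReal (D p z)) ≤ φ z
      rw [hD]
      simp only [e0, mul_zero, ENNReal.inv_zero, EReal.coe_ennreal_top, EReal.neg_top,
        EReal.add_bot]
      exact bot_le
  refine ⟨g, fun p => ⟨hg_cont p, (p.1 : ℝ), hg_bd p⟩, hg_le, fun y => ?_⟩
  refine le_antisymm ?_ (iSup_le fun p => hg_le p y)
  by_contra h
  rw [not_le] at h
  obtain ⟨q, hSq, hqφ⟩ := EReal.lt_iff_exists_rat_btwn.1 h
  have hyU : y ∈ U q := hqφ
  have hd : infEdist y (U q)ᶜ ≠ 0 := by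
    have hcl : y ∉ closure ((U q)ᶜ) := by
      rw [(hUopen q).isClosed_compl.closure_eq]
      simpa using hyU
    exact (infEdist_pos_iff_notMem_closure.2 hcl).ne'
  rcases eq_or_ne (infEdist y (U q)ᶜ) ⊤ with hdt | hdt
  · have hcalc : g (q, 0) y = ((q : ℝ) : EReal) := by
      show ((q : ℝ) : EReal) + -(ENNReal.toEReal (D (q, 0) y)) = _
      have : D (q, 0) y = 0 := by
        rw [hD]; simp [hdt]
      rw [this]
      simp
    have h2 : ((q : ℝ) : EReal) ≤ ⨆ p, g p y := hcalc ▸ le_iSup (fun p => g p y) (q, 0)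
    exact absurd h2 (not_le.2 hSq)
  · obtain ⟨r, hSr, hrq⟩ := EReal.lt_iff_exists_rat_btwn.1 hSq
    have hrq' : (r : ℝ) < (q : ℝ) := by exact_mod_cast hrq
    have hqr : (0 : ℝ) < (q : ℝ) - r := sub_pos.2 hrq'
    set ee := ENNReal.ofReal ((q : ℝ) - r) with hee_def
    have hee0 : ee ≠ 0 := by
      simp only [hee_def, ne_eq, ENNReal.ofReal_eq_zero, not_le]
      exact hqr
    obtain ⟨k, hk⟩ := ENNReal.exists_nat_gt (ENNReal.div_lt_top (ENNReal.inv_ne_top.2 hee0) hd).ne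
    have h1 : ee⁻¹ ≤ ((k : ℝ≥0∞) + 1) * infEdist y (U q)ᶜ := by
      have e1 : ee⁻¹ = ee⁻¹ / infEdist y (U q)ᶜ * infEdist y (U q)ᶜ :=
        (ENNReal.div_mul_cancel hd hdt).symm
      rw [e1]
      refine mul_le_mul_left (hk.le.trans ?_) _
      exact le_add_of_nonneg_right zero_le_one
    have h2 : D (q, k) y ≤ ee := by
      have h2' := ENNReal.inv_le_inv.2 h1
      rw [inv_inv] at h2'
      exact h2'
    have h3 : ENNReal.toEReal (D (q, k) y) ≤ (((q : ℝ) - r : ℝ) : EReal) := by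
      calc ENNReal.toEReal (D (q, k) y) ≤ (ee : EReal) :=
        EReal.coe_ennreal_le_coe_ennreal_iff.2 h2
      _ = (((q : ℝ) - r : ℝ) : EReal) := by
        rw [hee_def, EReal.coe_ennreal_ofReal, max_eq_left hqr.le]
    have h4 : ((r : ℝ) : EReal) ≤ g (q, k) y := by
      show ((r : ℝ) : EReal) ≤ ((q : ℝ) : EReal) + -(ENNReal.toEReal (D (q, k) y))
      have h5 : -(((q : ℝ) - r : ℝ) : EReal) ≤ -(ENNReal.toEReal (D (q, k) y)) :=
        EReal.neg_le_neg_iff.2 h3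
      have h6 := add_le_add_right h5 ((q : ℝ) : EReal)
      refine le_trans (le_of_eq ?_) h6
      rw [← EReal.coe_neg, ← EReal.coe_add]
      norm_num
    have h7 : ((r : ℝ) : EReal) ≤ ⨆ p, g p y := h4.trans (le_iSup (fun p => g p y) (q, k))
    exact absurd h7 (not_le.2 hSr)

/-- Monotone approximation of a lower semicontinuous function by bounded-above
continuous functions, on a Polish space. -/
lemma approx {Y : Type*} [TopologicalSpace Y] [PolishSpace Y] (φ : Y → EReal)
    (hφ : LowerSemicontinuous φ) :
    ∃ ψ : ℕ → Y → EReal, (∀ n, ψ n ∈ CB Y) ∧ Monotone ψ ∧ (∀ n, ψ n ≤ φ) ∧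
      ∀ y, φ y = ⨆ n, ψ n y := by
  letI := TopologicalSpace.upgradeIsCompletelyMetrizable Y
  obtain ⟨g, hmem, hle, hsup⟩ := approx0 φ hφ
  let e : ℕ ≃ ℚ × ℕ := (Denumerable.eqv (ℚ × ℕ)).symm
  refine ⟨runmax fun i => g (e i), runmax_mem fun i => hmem (e i),
    fun n m hnm => runmax_le _ fun k hk => le_runmax (fun i => g (e i)) (hk.trans hnm),
    fun n => runmax_le _ fun k _ => hle (e k), fun y => ?_⟩
  rw [iSup_runmax, Equiv.iSup_comp (g := fun p => g p y) e]
  exact hsup y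

end ExtLsc

open ExtLsc



/-- Any continuous quasi-linear form `F` on the bounded-above continuous
functions `C_b(Y)` on a Polish space `Y` (valued in `ℝ ∪ {-∞}`) extends
uniquely to a continuous quasi-linear form on the lower semicontinuous
functions, namely via `F̃(φ) = sup { F ψ | ψ ∈ C_b(Y), ψ ≤ φ }`. -/
theorem extension_to_lsc_unique {Y : Type*} [TopologicalSpace Y] [PolishSpace Y]
    (F : (Y → EReal) → EReal) :
    let Cb : Set (Y → EReal) := {φ | Continuous φ ∧ ∃ c : ℝ, ∀ y, φ y ≤ (c : EReal)}
    let Lsc : Set (Y → EReal) := {φ | LowerSemicontinuous φ ∧ ∀ y, φ y ≠ ⊤}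
    let Ext : ((Y → EReal) → EReal) → Prop := fun G =>
      (∀ φ ∈ Cb, G φ = F φ) ∧
      (∀ φ ∈ Lsc, ∀ ψ ∈ Lsc, φ ≤ ψ → G φ ≤ G ψ) ∧
      (∀ (lam : EReal), lam ≠ ⊤ → ∀ φ ∈ Lsc,
        G (fun y => lam + φ y) = lam + G φ) ∧
      (∃ α : EReal, α ≠ ⊤ ∧ ∀ φ ∈ Lsc, ∀ ψ ∈ Lsc,
        G (φ ⊔ ψ) ≤ α + max (G φ) (G ψ)) ∧
      (∀ φ : ℕ → Y → EReal, (∀ n, φ n ∈ Lsc) → Monotone φ →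
        G (fun y => ⨆ n, φ n y) = ⨆ n, G (φ n))
    -- `F` is a continuous quasi-linear form on `C_b(Y)`:
    (∀ φ ∈ Cb, ∀ ψ ∈ Cb, φ ≤ ψ → F φ ≤ F ψ) →
    (∀ (lam : EReal), lam ≠ ⊤ → ∀ φ ∈ Cb, F (fun y => lam + φ y) = lam + F φ) →
    (∃ α : EReal, α ≠ ⊤ ∧ ∀ φ ∈ Cb, ∀ ψ ∈ Cb,
      F (φ ⊔ ψ) ≤ α + max (F φ) (F ψ)) →
    (∀ φ : ℕ → Y → EReal, (∀ n, φ n ∈ Cb) → Monotone φ →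
      (fun y => ⨆ n, φ n y) ∈ Cb →
      F (fun y => ⨆ n, φ n y) = ⨆ n, F (φ n)) →
    -- then the sup-formula is the unique extension:
    (Ext (fun φ => ⨆ ψ ∈ {ψ ∈ Cb | ψ ≤ φ}, F ψ) ∧
      ∀ G, Ext G → ∀ φ ∈ Lsc, G φ = ⨆ ψ ∈ {ψ ∈ Cb | ψ ≤ φ}, F ψ) := by
  intro Cb Lsc Ext monoF homF qlF contF
  obtain ⟨α, hα, hql⟩ := qlF
  -- basic facts about the sup formula
  have G0_le_of_mem : ∀ {χ φ : Y → EReal}, χ ∈ Cb → χ ≤ φ →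
      F χ ≤ ⨆ ψ ∈ {ψ ∈ Cb | ψ ≤ φ}, F ψ := by
    intro χ φ hm hle
    exact le_iSup₂ (f := fun ψ (_ : ψ ∈ {ψ ∈ Cb | ψ ≤ φ}) => F ψ) χ ⟨hm, hle⟩
  have G0_le : ∀ {φ : Y → EReal} {b : EReal}, (∀ χ ∈ Cb, χ ≤ φ → F χ ≤ b) →
      (⨆ ψ ∈ {ψ ∈ Cb | ψ ≤ φ}, F ψ) ≤ b := by
    intro φ b h
    exact iSup₂_le fun χ hχ => h χ hχ.1 hχ.2
  have G0_mono : ∀ {φ φ' : Y → EReal}, φ ≤ φ' →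
      (⨆ ψ ∈ {ψ ∈ Cb | ψ ≤ φ}, F ψ) ≤ ⨆ ψ ∈ {ψ ∈ Cb | ψ ≤ φ'}, F ψ :=
    fun h => G0_le fun χ hm hle => G0_le_of_mem hm (hle.trans h)
  -- the "min trick"
  have minkey : ∀ (χ : Y → EReal), χ ∈ Cb → ∀ (ξ : ℕ → Y → EReal), (∀ m, ξ m ∈ Cb) →
      Monotone ξ → (∀ y, χ y ≤ ⨆ m, ξ m y) →
      F χ = ⨆ m, F (fun y => χ y ⊓ ξ m y) := by
    intro χ hχ ξ hξm hξmono hle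
    have hζm : ∀ m, (fun y => χ y ⊓ ξ m y) ∈ Cb := fun m => min_mem hχ (hξm m)
    have hζmono : Monotone (fun m => fun y => χ y ⊓ ξ m y) :=
      fun m m' h y => inf_le_inf_left (χ y) (hξmono h y)
    have hfun : (fun y => ⨆ m, (χ y ⊓ ξ m y)) = χ := funext fun y => by
      rw [← inf_iSup_eq]
      exact inf_eq_left.2 (hle y)
    have h := contF _ hζm hζmono (by rw [hfun]; exact hχ)
    rw [hfun] at h
    exact h
  refine ⟨⟨?_, ?_, ?_, ?_, ?_⟩, ?_⟩
  · -- agrees with F on Cb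
    intro φ hφ
    exact le_antisymm (G0_le fun χ hm hle => monoF χ hm φ hφ hle) (G0_le_of_mem hφ le_rfl)
  · -- monotone
    intro φ _ ψ _ h
    exact G0_mono h
  · -- additively homogeneous
    intro lam hlam φ hφ
    induction lam using EReal.rec with
    | top => exact absurd rfl hlam
    | bot =>
      have hfun : (fun y => (⊥ : EReal) + φ y) = fun _ => (⊥ : EReal) :=
        funext fun y => EReal.bot_add _
      have hFbot : F (fun _ : Y => (⊥ : EReal)) = ⊥ := by
        have h0 := homF ⊥ (by simp) (fun _ => (⊥ : EReal)) bot_mem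
        rw [show (fun y : Y => (⊥ : EReal) + (fun _ : Y => (⊥ : EReal)) y)
            = fun _ : Y => (⊥ : EReal) from funext fun _ => EReal.bot_add _] at h0
        rw [h0, EReal.bot_add]
      rw [hfun, EReal.bot_add]
      refine le_antisymm (G0_le fun χ hm hle => ?_) bot_le
      have hc : χ = fun _ => (⊥ : EReal) := funext fun y => le_bot_iff.1 (hle y)
      rw [hc, hFbot]
    | coe r =>
      apply le_antisymm
      · apply G0_le
        intro χ hm hle
        set χ' : Y → EReal := fun y => ((-r : ℝ) : EReal) + χ y with hχ'
        have hm' : χ' ∈ Cb := const_add_mem (-r) hm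
        have hle' : χ' ≤ φ := by
          intro y
          have h2 : ((-r : ℝ) : EReal) + χ y ≤ ((-r : ℝ) : EReal) + ((r : EReal) + φ y) :=
            add_le_add_right (hle y) _
          rw [cancel r (φ y)] at h2
          exact h2
        have hrw : χ = fun y => (r : EReal) + χ' y := funext fun y => (cancel' r (χ y)).symm
        rw [hrw, homF r (EReal.coe_ne_top r) χ' hm']
        exact add_le_add_right (G0_le_of_mem hm' hle') _
      · rw [add_iSup]
        refine iSup_le fun ψ' => ?_
        rw [add_iSup]
        refine iSup_le fun hψ' => ?_
        rw [← homF r (EReal.coe_ne_top r) ψ' hψ'.1]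
        exact G0_le_of_mem (const_add_mem r hψ'.1) fun y => add_le_add_right (hψ'.2 y) _
  · -- quasi-linearity
    refine ⟨α, hα, ?_⟩
    intro φ hφ ψ hψ
    obtain ⟨a, ham, hamono, hale, hasup⟩ := approx φ hφ.1
    obtain ⟨b, hbm, hbmono, hble, hbsup⟩ := approx ψ hψ.1
    apply G0_le
    intro χ hχm hχle
    have hξm : ∀ m, (a m ⊔ b m) ∈ Cb := fun m => max_mem (ham m) (hbm m)
    have hξmono : Monotone fun m => a m ⊔ b m :=
      fun m m' h => sup_le_sup (hamono h) (hbmono h)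
    have hξsup : ∀ y, χ y ≤ ⨆ m, (a m ⊔ b m) y := by
      intro y
      have he : (⨆ m, (a m ⊔ b m) y) = φ y ⊔ ψ y := by
        simp only [Pi.sup_apply]
        rw [iSup_sup_eq, ← hasup y, ← hbsup y]
      rw [he]
      exact hχle y
    have key := minkey χ hχm (fun m => a m ⊔ b m) hξm hξmono hξsup
    rw [key]
    refine iSup_le fun m => ?_
    calc F (fun y => χ y ⊓ (a m ⊔ b m) y)
        ≤ F (a m ⊔ b m) :=
          monoF _ (min_mem hχm (hξm m)) _ (hξm m) fun y => inf_le_right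
      _ ≤ α + max (F (a m)) (F (b m)) := hql (a m) (ham m) (b m) (hbm m)
      _ ≤ α + max (⨆ ψ' ∈ {ψ' ∈ Cb | ψ' ≤ φ}, F ψ') (⨆ ψ' ∈ {ψ' ∈ Cb | ψ' ≤ ψ}, F ψ') :=
          add_le_add_right
            (max_le_max (G0_le_of_mem (ham m) (hale m)) (G0_le_of_mem (hbm m) (hble m))) α
  · -- continuity
    intro φs hφs hmono
    apply le_antisymm
    · apply G0_le
      intro χ hχm hχle
      choose a ham hamono hale hasup using fun n => approx (φs n) (hφs n).1
      set ξ : ℕ → Y → EReal := fun m => runmax (fun n => a n m) m with hξ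
      have hξm : ∀ m, ξ m ∈ Cb := fun m => runmax_mem (fun n => ham n m) m
      have hξmono : Monotone ξ := fun m m' h => runmax_le _ fun k hk =>
        le_trans (hamono k h) (le_runmax (fun n => a n m') (hk.trans h))
      have hξsup : ∀ y, χ y ≤ ⨆ m, ξ m y := by
        intro y
        refine le_trans (hχle y) (iSup_le fun n => ?_)
        rw [hasup n y]
        refine iSup_le fun k => ?_
        refine le_trans ?_ (le_iSup (fun m => ξ m y) (max n k))
        exact le_trans (hamono n (le_max_right n k) y)
          (le_runmax (fun j => a j (max n k)) (le_max_left n k) y)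
      have key := minkey χ hχm ξ hξm hξmono hξsup
      rw [key]
      refine iSup_le fun m => ?_
      have hζle : (fun y => χ y ⊓ ξ m y) ≤ φs m := fun y =>
        le_trans inf_le_right
          ((runmax_le (fun n => a n m) fun k hk => (hale k m).trans (hmono hk)) y)
      exact le_trans (G0_le_of_mem (min_mem hχm (hξm m)) hζle)
        (le_iSup (fun n => ⨆ ψ ∈ {ψ ∈ Cb | ψ ≤ φs n}, F ψ) m)
    · exact iSup_le fun n => G0_mono fun y => le_iSup (fun m => φs m y) n
  · -- uniqueness
    intro G hG φ hφ
    obtain ⟨hG1, -, -, -, hG5⟩ := hG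
    obtain ⟨a, ham, hamono, hale, hasup⟩ := approx φ hφ.1
    have hfun : (fun y => ⨆ n, a n y) = φ := funext fun y => (hasup y).symm
    have hLsc : ∀ n, a n ∈ Lsc := by
      intro n
      obtain ⟨hcont, c, hc⟩ := ham n
      exact ⟨hcont.lowerSemicontinuous, fun y => ((hc y).trans_lt (EReal.coe_lt_top c)).ne⟩
    have h2 := hG5 a hLsc hamono
    rw [hfun] at h2
    rw [h2]
    have h3 : (⨆ n, G (a n)) = ⨆ n, F (a n) := iSup_congr fun n => hG1 (a n) (ham n)
    rw [h3]
    refine le_antisymm (iSup_le fun n => G0_le_of_mem (ham n) (hale n))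
      (G0_le fun χ hχm hχle => ?_)
    have key := minkey χ hχm a ham hamono fun y => (hχle y).trans_eq (hasup y)
    rw [key]
    exact iSup_le fun m =>
      le_trans (monoF _ (min_mem hχm (ham m)) (a m) (ham m) fun y => inf_le_right)
        (le_iSup (fun n => F (a n)) m)
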